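/- There is no elliptic curve over Q with good reduction at every prime. (Equivalently, there is no abelian scheme of relative dimension 1 over Spec Z.) -/

import Mathlib

/-- If `s ^ 2 = n * t + r` and `r` is not a square mod `n`, contradiction. -/
lemma not_sq_lin {n : ℕ} [NeZero n] {s r : ℤ} (t : ℤ) (h : s ^ 2 = (n : ℤ) * t + r)
    (hr : ∀ x : ZMod n, x ^ 2 ≠ ((r : ℤ) : ZMod n)) : False := by
  apply hr (s : ZMod n)
  have h2 := congrArg (fun z : ℤ => (z : ZMod n)) h
  push_cast at h2
  simpa [ZMod.natCast_self] using h2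

/-- Coprimality from 2- and 3-indivisibility plus common divisors dividing 432. -/
lemma isCoprime_aux {A B : ℤ} (h2 : ¬ (2 : ℤ) ∣ A) (h3 : ¬ (3 : ℤ) ∣ B)
    (hd : ∀ d : ℤ, d ∣ A → d ∣ B → d ∣ 432) : IsCoprime A B := by
  rw [Int.isCoprime_iff_gcd_eq_one]
  by_contra hg
  have hgA : (Int.gcd A B : ℤ) ∣ A := Int.gcd_dvd_left A B
  have hgB : (Int.gcd A B : ℤ) ∣ B := Int.gcd_dvd_right A B
  have h432 : (Int.gcd A B : ℤ) ∣ 432 := hd _ hgA hgB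
  have h432' : Int.gcd A B ∣ 432 := by exact_mod_cast h432
  have hg2 : ¬ 2 ∣ Int.gcd A B := by
    intro h
    exact h2 (dvd_trans (by exact_mod_cast Int.natCast_dvd_natCast.mpr h) hgA)
  have hg3 : ¬ 3 ∣ Int.gcd A B := by
    intro h
    exact h3 (dvd_trans (by exact_mod_cast Int.natCast_dvd_natCast.mpr h) hgB)
  have c2 : Nat.Coprime (Int.gcd A B) 2 :=
    Nat.coprime_comm.mp ((Nat.prime_two.coprime_iff_not_dvd).mpr hg2)
  have c3 : Nat.Coprime (Int.gcd A B) 3 :=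
    Nat.coprime_comm.mp ((Nat.prime_three.coprime_iff_not_dvd).mpr hg3)
  have hco : Nat.Coprime (Int.gcd A B) 432 := by
    have h432eq : (432 : ℕ) = 2 ^ 4 * 3 ^ 3 := by norm_num
    rw [h432eq]
    exact Nat.Coprime.mul_right (c2.pow_right _) (c3.pow_right _)
  exact hg (hco.eq_one_of_dvd h432')

lemma sq_of_coprime_pos {A B c : ℤ} (hco : IsCoprime A B) (h : A * B = c ^ 2) (hA : 0 < A) :
    ∃ s, A = s ^ 2 := by
  obtain ⟨s, hs | hs⟩ := Int.sq_of_isCoprime hco h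
  · exact ⟨s, hs⟩
  · nlinarith [sq_nonneg s]

set_option maxHeartbeats 1600000 in
/-- There is no elliptic curve over `ℚ` with good reduction at every prime:
no integral Weierstrass model has (minimal) discriminant `±1`, i.e. a unit. -/
theorem no_elliptic_curve_good_reduction_everywhere :
    ∀ W : WeierstrassCurve ℤ, ¬ IsUnit W.Δ := by
  intro W hW
  have hε : W.Δ = 1 ∨ W.Δ = -1 := Int.isUnit_iff.mp hW
  have hc : 1728 * W.Δ = W.c₄ ^ 3 - W.c₆ ^ 2 := W.c_relation
  obtain ⟨ε, hεd⟩ : ∃ x, W.Δ = x := ⟨_, rfl⟩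
  obtain ⟨C4, hC4d⟩ : ∃ x, W.c₄ = x := ⟨_, rfl⟩
  obtain ⟨C6, hC6d⟩ : ∃ x, W.c₆ = x := ⟨_, rfl⟩
  rw [hεd] at hε
  rw [hεd, hC4d, hC6d] at hc
  have hεsq : ε * ε = 1 := by rcases hε with h | h <;> rw [h] <;> norm_num
  have hE : C6 ^ 2 = C4 ^ 3 - 1728 * ε := by linarith
  rcases Int.even_or_odd W.a₁ with ⟨k, hk⟩ | ⟨k, hk⟩
  · -- `a₁` even : contradiction mod 64
    have h4' : C4 = 16 * ((k ^ 2 + W.a₂) ^ 2 - 3 * (W.a₄ + k * W.a₃)) := by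
      rw [← hC4d]
      simp only [WeierstrassCurve.c₄, WeierstrassCurve.b₂, WeierstrassCurve.b₄]
      rw [hk]; ring
    have h6' : C6 = 8 * (-8 * (k ^ 2 + W.a₂) ^ 3 + 36 * (k ^ 2 + W.a₂) * (W.a₄ + k * W.a₃)
        - 27 * (W.a₃ ^ 2 + 4 * W.a₆)) := by
      rw [← hC6d]
      simp only [WeierstrassCurve.c₆, WeierstrassCurve.b₂, WeierstrassCurve.b₄,
        WeierstrassCurve.b₆]
      rw [hk]; ring
    obtain ⟨n, h4⟩ : ∃ n, C4 = 16 * n := ⟨_, h4'⟩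
    obtain ⟨m, h6⟩ : ∃ m, C6 = 8 * m := ⟨_, h6'⟩
    clear h4' h6' hk hc hεd hC4d hC6d hW
    clear W
    have key : m ^ 2 = 64 * n ^ 3 - 27 * ε := by
      rw [h4, h6] at hE
      have h64 : 64 * m ^ 2 = 64 * (64 * n ^ 3 - 27 * ε) := by linear_combination hE
      linarith
    rcases hε with h1 | h1 <;> rw [h1] at key
    · exact not_sq_lin (n := 64) (s := m) (r := 37) (n ^ 3 - 1) (by push_cast; linarith) (by decide)
    · exact not_sq_lin (n := 64) (s := m) (r := 27) (n ^ 3) (by push_cast; linarith) (by decide)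
  · -- `a₁ = 2k+1` odd
    have h4' : C4 = 8 * (2 * (k ^ 2 + k + W.a₂) ^ 2 + (k ^ 2 + k + W.a₂) - 6 * W.a₄
        - 3 * W.a₃ * (2 * k + 1)) + 1 := by
      rw [← hC4d]
      simp only [WeierstrassCurve.c₄, WeierstrassCurve.b₂, WeierstrassCurve.b₄]
      rw [hk]; ring
    have h6' : C6 = 2 * (-32 * (k ^ 2 + k + W.a₂) ^ 3 - 24 * (k ^ 2 + k + W.a₂) ^ 2
        - 6 * (k ^ 2 + k + W.a₂) + 18 * (4 * (k ^ 2 + k + W.a₂) + 1) * (2 * W.a₄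
        + (2 * k + 1) * W.a₃) - 108 * (W.a₃ ^ 2 + 4 * W.a₆)) - 1 := by
      rw [← hC6d]
      simp only [WeierstrassCurve.c₆, WeierstrassCurve.b₂, WeierstrassCurve.b₄,
        WeierstrassCurve.b₆]
      rw [hk]; ring
    obtain ⟨u, h4⟩ : ∃ u, C4 = 8 * u + 1 := ⟨_, h4'⟩
    obtain ⟨v, h6⟩ : ∃ v, C6 = 2 * v - 1 := ⟨_, h6'⟩
    clear h4' h6' hk hc hεd hC4d hC6d hW
    clear W
    have hC6ne : C6 ≠ 0 := by omega
    by_cases h3 : (3 : ℤ) ∣ C4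
    · -- 3 ∣ c₄
      obtain ⟨e, he⟩ := h3
      have h3c6 : (3 : ℤ) ∣ C6 := by
        refine Int.prime_three.dvd_of_dvd_pow (n := 2) ⟨9 * e ^ 3 - 576 * ε, ?_⟩
        rw [hE, he]; ring
      obtain ⟨d, hd⟩ := h3c6
      have hd2 : d ^ 2 = 3 * e ^ 3 - 192 * ε := by
        rw [he, hd] at hE
        have h9 : 9 * d ^ 2 = 9 * (3 * e ^ 3 - 192 * ε) := by linear_combination hE
        linarith
      have h3d : (3 : ℤ) ∣ d :=
        Int.prime_three.dvd_of_dvd_pow (n := 2) ⟨e ^ 3 - 64 * ε, by rw [hd2]; ring⟩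
      obtain ⟨f, hf⟩ := h3d
      have hf2 : 3 * f ^ 2 = e ^ 3 - 64 * ε := by
        rw [hf] at hd2
        have h9 : 9 * (3 * f ^ 2) = 9 * (e ^ 3 - 64 * ε) := by linear_combination 3 * hd2
        linarith
      have hemod : e % 8 = 3 := by omega
      have hAB : (e - 4 * ε) * (e ^ 2 + 4 * ε * e + 16) = 3 * f ^ 2 := by
        linear_combination -hf2 - 16 * e * hεsq
      have hBpos : 0 < e ^ 2 + 4 * ε * e + 16 := by
        nlinarith [sq_nonneg (e + 2 * ε), hεsq]
      have hAmod : (e - 4 * ε) % 8 = 7 := by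
        rcases hε with h1 | h1 <;> rw [h1] <;> omega
      have hAne : e - 4 * ε ≠ 0 := by omega
      have hApos : 0 < e - 4 * ε := by
        rcases lt_or_gt_of_ne hAne with h | h
        · nlinarith [sq_nonneg f]
        · exact h
      have h3A : (3 : ℤ) ∣ e - 4 * ε := by
        have hcube : (3 : ℤ) ∣ e ^ 3 - e := by
          have hz : ∀ x : ZMod 3, x ^ 3 - x = 0 := by decide
          have h0 := hz (e : ZMod 3)
          have h1 : ((e ^ 3 - e : ℤ) : ZMod 3) = 0 := by push_cast; simp [h0]
          exact (ZMod.intCast_zmod_eq_zero_iff_dvd _ 3).mp h1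
        obtain ⟨q, hq⟩ := hcube
        exact ⟨-q + f ^ 2 + 20 * ε, by linarith⟩
      obtain ⟨A1, hA1⟩ := h3A
      have hB3 : e ^ 2 + 4 * ε * e + 16 = 3 * (3 * A1 ^ 2 + 12 * ε * A1 + 16) := by
        linear_combination (e + 3 * A1 + 8 * ε) * hA1 + 32 * hεsq
      have h3B1 : ¬ (3 : ℤ) ∣ (3 * A1 ^ 2 + 12 * ε * A1 + 16) := by
        rintro ⟨q, hq⟩
        have h16 : (3 : ℤ) ∣ 16 := ⟨q - A1 ^ 2 - 4 * ε * A1, by linarith⟩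
        norm_num at h16
      have hf3 : f ^ 2 = 3 * (A1 * (3 * A1 ^ 2 + 12 * ε * A1 + 16)) := by
        have h9 : 3 * f ^ 2 = 3 * (3 * (A1 * (3 * A1 ^ 2 + 12 * ε * A1 + 16))) := by
          linear_combination -hAB + (e ^ 2 + 4 * ε * e + 16) * hA1 + 3 * A1 * hB3
        linarith
      obtain ⟨f1, hf1⟩ := Int.prime_three.dvd_of_dvd_pow (n := 2)
        ⟨A1 * (3 * A1 ^ 2 + 12 * ε * A1 + 16), hf3⟩
      have hf4 : 3 * f1 ^ 2 = A1 * (3 * A1 ^ 2 + 12 * ε * A1 + 16) := by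
        rw [hf1] at hf3
        have h9 : 3 * (3 * f1 ^ 2) = 3 * (A1 * (3 * A1 ^ 2 + 12 * ε * A1 + 16)) := by
          linear_combination hf3
        linarith
      have h3A1 : (3 : ℤ) ∣ A1 := by
        have hdm : (3 : ℤ) ∣ A1 * (3 * A1 ^ 2 + 12 * ε * A1 + 16) := ⟨f1 ^ 2, hf4.symm⟩
        rcases (Int.prime_three.dvd_mul).mp hdm with h | h
        · exact h
        · exact absurd h h3B1
      obtain ⟨A2, hA2⟩ := h3A1
      have hf5 : A2 * (3 * A1 ^ 2 + 12 * ε * A1 + 16) = f1 ^ 2 := by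
        have h9 : 3 * (A2 * (3 * A1 ^ 2 + 12 * ε * A1 + 16)) = 3 * f1 ^ 2 := by
          linear_combination -hf4 - (3 * A1 ^ 2 + 12 * ε * A1 + 16) * hA2
        linarith
      have h2A2 : ¬ (2 : ℤ) ∣ A2 := by
        rintro ⟨q, hq⟩
        have : e - 4 * ε = 18 * q := by rw [hA1, hA2, hq]; ring
        omega
      have hco : IsCoprime A2 (3 * A1 ^ 2 + 12 * ε * A1 + 16) := by
        refine isCoprime_aux h2A2 h3B1 ?_
        intro p hpA hpB
        have hpA' : p ∣ e - 4 * ε := by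
          rw [hA1, hA2]; exact Dvd.dvd.mul_left (hpA.mul_left 3) 3
        have hpB' : p ∣ e ^ 2 + 4 * ε * e + 16 := by
          rw [hB3]; exact Dvd.dvd.mul_left hpB 3
        have h48 : p ∣ 48 := by
          have hkey : (48 : ℤ) = (e ^ 2 + 4 * ε * e + 16) - (e - 4 * ε) * (e - 4 * ε)
              - 12 * ε * (e - 4 * ε) + (-32) * (ε * ε - 1) := by ring
          have hz : ε * ε - 1 = 0 := by rw [hεsq]; ring
          rw [hz] at hkey
          norm_num at hkey
          rw [hkey]
          exact dvd_sub (dvd_sub hpB' (hpA'.mul_left _)) (hpA'.mul_left _)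
        exact h48.trans (by norm_num)
      have hA2pos : 0 < A2 := by
        have h9 : e - 4 * ε = 9 * A2 := by rw [hA1, hA2]; ring
        linarith
      obtain ⟨s, hs⟩ := sq_of_coprime_pos hco hf5 hA2pos
      have hsq9 : (3 * s) ^ 2 = 8 * ((e - 4 * ε - 7) / 8) + 7 := by
        have h9 : e - 4 * ε = 9 * A2 := by rw [hA1, hA2]; ring
        have h99 : (3 * s) ^ 2 = e - 4 * ε := by rw [h9, hs]; ring
        omega
      exact not_sq_lin (n := 8) (r := 7) _ hsq9 (by decide)
    · -- 3 ∤ c₄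
      have hAB : (C4 - 12 * ε) * (C4 ^ 2 + 12 * ε * C4 + 144) = C6 ^ 2 := by
        linear_combination -hE - 144 * C4 * hεsq
      have hBpos : 0 < C4 ^ 2 + 12 * ε * C4 + 144 := by
        nlinarith [sq_nonneg (C4 + 6 * ε), hεsq]
      have hC6sq : 0 < C6 ^ 2 := by positivity
      have hApos : 0 < C4 - 12 * ε := by
        rcases lt_trichotomy (C4 - 12 * ε) 0 with h | h | h
        · nlinarith
        · nlinarith
        · exact h
      have hAmod : (C4 - 12 * ε) % 8 = 5 := by
        rcases hε with h1 | h1 <;> rw [h1] <;> omega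
      have h2A : ¬ (2 : ℤ) ∣ (C4 - 12 * ε) := by omega
      have h3B : ¬ (3 : ℤ) ∣ (C4 ^ 2 + 12 * ε * C4 + 144) := by
        rintro ⟨q, hq⟩
        have hsq : (3 : ℤ) ∣ C4 ^ 2 := ⟨q - 4 * ε * C4 - 48, by linarith⟩
        exact h3 (Int.prime_three.dvd_of_dvd_pow hsq)
      have hco : IsCoprime (C4 - 12 * ε) (C4 ^ 2 + 12 * ε * C4 + 144) := by
        refine isCoprime_aux h2A h3B ?_
        intro p hpA hpB
        have hkey : (432 : ℤ) = (C4 ^ 2 + 12 * ε * C4 + 144) - (C4 - 12 * ε) * (C4 - 12 * ε)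
            - 36 * ε * (C4 - 12 * ε) + (-288) * (ε * ε - 1) := by ring
        have hz : ε * ε - 1 = 0 := by rw [hεsq]; ring
        rw [hz] at hkey
        norm_num at hkey
        rw [hkey]
        exact dvd_sub (dvd_sub hpB (hpA.mul_left _)) (hpA.mul_left _)
      obtain ⟨s, hs⟩ := sq_of_coprime_pos hco hAB hApos
      have hsq : s ^ 2 = 8 * ((C4 - 12 * ε - 5) / 8) + 5 := by omega
      exact not_sq_lin (n := 8) (r := 5) _ hsq (by decide)
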